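/- The predictor w* = (1/(‖μ‖₂·√(1+γ²)))·[γμ, μ, 0_d] ∈ ℝ^{3d} satisfies Acc_{P_{c1}}(w*) = 0.5·erfc(−ρ1·√(1 + 1/γ)). -/

import Mathlib

open MeasureTheory ProbabilityTheory Real Filter
open scoped ENNReal NNReal

noncomputable section

/-- Complementary error function `erfc x = (2/√π) ∫_x^∞ e^{−t²} dt`. -/
def erfc (x : ℝ) : ℝ := 2 / Real.sqrt Real.pi * ∫ t in Set.Ioi x, Real.exp (-t ^ 2)

/-- A vector in `ℝ^d`. -/
abbrev Vec (d : ℕ) := Fin d → ℝ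

/-- The input space `ℝ^{3d}`, viewed as three blocks `x = [x1, x2, x3]`. -/
abbrev Inp (d : ℕ) := Vec d × Vec d × Vec d

/-- Euclidean dot product on `ℝ^d`. -/
def dot {d : ℕ} (v w : Vec d) : ℝ := ∑ i, v i * w i

/-- Euclidean norm on `ℝ^d`. -/
def vnorm {d : ℕ} (v : Vec d) : ℝ := Real.sqrt (∑ i, v i ^ 2)

/-- Euclidean norm on the full input space `ℝ^{3d}`. -/
def xnorm {d : ℕ} (x : Inp d) : ℝ :=
  Real.sqrt ((∑ i, x.1 i ^ 2) + (∑ i, x.2.1 i ^ 2) + ∑ i, x.2.2 i ^ 2)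

/-- Value `wᵀx` of the linear predictor `w` at input `x`. -/
def pred {d : ℕ} (w x : Inp d) : ℝ := dot w.1 x.1 + dot w.2.1 x.2.1 + dot w.2.2 x.2.2

/-- Isotropic Gaussian `N(m, v·I_d)` on `ℝ^d` (product of coordinate Gaussians). -/
def gaussVec (d : ℕ) (m : Vec d) (v : ℝ) : Measure (Vec d) :=
  Measure.pi fun i => gaussianReal (m i) (Real.toNNReal v)

/-- Conditional law of `x` given the label `y` in context `c1`:
`x1 ~ N(μy, σ²I)`, `x2 ~ N(μy, γσ²I)`, `x3 ~ N(μ, η²I)`, independent blocks. -/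
def condX1 (d : ℕ) (μ : Vec d) (σ γ η : ℝ) (y : ℝ) : Measure (Inp d) :=
  (gaussVec d (fun i => μ i * y) (σ ^ 2)).prod
    ((gaussVec d (fun i => μ i * y) (γ * σ ^ 2)).prod
      (gaussVec d μ (η ^ 2)))

/-- Conditional law of `x` given the label `y` in context `c2`:
`x1 ~ N(μy, σ²I)`, `x2 ~ N(−μy, (σ²/γ)I)`, `x3 ~ N(−μ, η²I)`, independent blocks. -/
def condX2 (d : ℕ) (μ : Vec d) (σ γ η : ℝ) (y : ℝ) : Measure (Inp d) :=
  (gaussVec d (fun i => μ i * y) (σ ^ 2)).prod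
    ((gaussVec d (fun i => -μ i * y) (σ ^ 2 / γ)).prod
      (gaussVec d (fun i => -μ i) (η ^ 2)))

/-- Joint law of `(x, y)`: `y` uniform on `{−1, 1}`, then `x ~ cond y`. -/
def jointOf {d : ℕ} (cond : ℝ → Measure (Inp d)) : Measure (Inp d × ℝ) :=
  (2 : ℝ≥0∞)⁻¹ • (cond 1).prod (Measure.dirac (1 : ℝ))
    + (2 : ℝ≥0∞)⁻¹ • (cond (-1)).prod (Measure.dirac (-1 : ℝ))

/-- The context-`c1` distribution over `(x, y)`. -/
def Pc1 (d : ℕ) (μ : Vec d) (σ γ η : ℝ) : Measure (Inp d × ℝ) :=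
  jointOf (condX1 d μ σ γ η)

/-- The context-`c2` distribution over `(x, y)`. -/
def Pc2 (d : ℕ) (μ : Vec d) (σ γ η : ℝ) : Measure (Inp d × ℝ) :=
  jointOf (condX2 d μ σ γ η)

/-- Accuracy `Acc_P(w) = P(sign(wᵀx) = y)` of linear predictor `w` under joint law `P`. -/
def AccP {d : ℕ} (P : Measure (Inp d × ℝ)) (w : Inp d) : ℝ :=
  (P {p | Real.sign (pred w p.1) = p.2}).toReal

/-- Norm-bounded linear predictors `W1 = {w ∈ ℝ^{3d} : ‖w‖₂ ≤ 1}`. -/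
def W1 (d : ℕ) : Set (Inp d) := {w | xnorm w ≤ 1}

/-- Population exponential loss `E_P[exp(−y·wᵀx)]`. -/
def expLoss {d : ℕ} (P : Measure (Inp d × ℝ)) (w : Inp d) : ℝ :=
  ∫ p, Real.exp (-(p.2 * pred w p.1)) ∂P

end


section Helpers

open Set

lemma pdf_mul_key (m1 m2 t : ℝ) {v1 v2 : ℝ≥0} (h1 : v1 ≠ 0) (h2 : v2 ≠ 0) (x : ℝ) :
    gaussianPDFReal m1 v1 x * gaussianPDFReal m2 v2 (t - x)
      = gaussianPDFReal (m1 + m2) (v1 + v2) t *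
        gaussianPDFReal (m1 + (v1 : ℝ) * (t - m1 - m2) / ((v1 : ℝ) + v2)) (v1 * v2 / (v1 + v2)) x := by
  have hw1 : (0:ℝ) < v1 := by positivity
  have hw2 : (0:ℝ) < v2 := by positivity
  have hπ : (0:ℝ) < Real.pi := Real.pi_pos
  simp only [gaussianPDFReal]
  push_cast
  rw [mul_mul_mul_comm, mul_mul_mul_comm ((Real.sqrt (2 * Real.pi * ((v1:ℝ) + v2)))⁻¹)]
  congr 1
  · rw [← mul_inv, ← Real.sqrt_mul (by positivity), ← mul_inv, ← Real.sqrt_mul (by positivity)]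
    congr 2
    field_simp
  · rw [← Real.exp_add, ← Real.exp_add]
    congr 1
    field_simp
    ring

lemma pdf_conv (m1 m2 t : ℝ) {v1 v2 : ℝ≥0} (h1 : v1 ≠ 0) (h2 : v2 ≠ 0) :
    ∫ x, gaussianPDFReal m1 v1 x * gaussianPDFReal m2 v2 (t - x)
      = gaussianPDFReal (m1 + m2) (v1 + v2) t := by
  have hvs : v1 * v2 / (v1 + v2) ≠ 0 := by
    simp [div_eq_zero_iff, h1, h2]
  calc ∫ x, gaussianPDFReal m1 v1 x * gaussianPDFReal m2 v2 (t - x)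
      = ∫ x, gaussianPDFReal (m1 + m2) (v1 + v2) t *
          gaussianPDFReal (m1 + (v1 : ℝ) * (t - m1 - m2) / ((v1 : ℝ) + v2))
            (v1 * v2 / (v1 + v2)) x := by
        congr 1; ext x; exact pdf_mul_key m1 m2 t h1 h2 x
    _ = gaussianPDFReal (m1 + m2) (v1 + v2) t := by
        rw [MeasureTheory.integral_const_mul, integral_gaussianPDFReal_eq_one _ hvs, mul_one]

lemma integrable_pdf_mul (m1 m2 t : ℝ) {v1 v2 : ℝ≥0} (h1 : v1 ≠ 0) (h2 : v2 ≠ 0) :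
    MeasureTheory.Integrable
      (fun x => gaussianPDFReal m1 v1 x * gaussianPDFReal m2 v2 (t - x)) := by
  have heq : (fun x => gaussianPDFReal m1 v1 x * gaussianPDFReal m2 v2 (t - x))
      = fun x => gaussianPDFReal (m1 + m2) (v1 + v2) t *
          gaussianPDFReal (m1 + (v1 : ℝ) * (t - m1 - m2) / ((v1 : ℝ) + v2))
            (v1 * v2 / (v1 + v2)) x := by
    ext x; exact pdf_mul_key m1 m2 t h1 h2 x
  rw [heq]
  exact (integrable_gaussianPDFReal _ _).const_mul _

lemma gaussian_conv (m1 m2 : ℝ) (v1 v2 : ℝ≥0) :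
    ((gaussianReal m1 v1).prod (gaussianReal m2 v2)).map (fun p => p.1 + p.2)
      = gaussianReal (m1 + m2) (v1 + v2) := by
  by_cases h1 : v1 = 0
  · subst h1
    rw [gaussianReal_zero_var, Measure.dirac_prod, Measure.map_map (by fun_prop) (by fun_prop)]
    have : ((fun p : ℝ × ℝ => p.1 + p.2) ∘ Prod.mk m1) = (m1 + ·) := rfl
    rw [this, gaussianReal_map_const_add, add_comm m2 m1, zero_add]
  by_cases h2 : v2 = 0
  · subst h2
    rw [gaussianReal_zero_var, Measure.prod_dirac, Measure.map_map (by fun_prop) (by fun_prop)]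
    have : ((fun p : ℝ × ℝ => p.1 + p.2) ∘ (fun x => (x, m2))) = (· + m2) := rfl
    rw [this, gaussianReal_map_add_const, add_zero]
  have h12 : v1 + v2 ≠ 0 := by simp [h1, h2]
  have hmeas2 : Measurable (fun q : ℝ × ℝ => ENNReal.ofReal (gaussianPDFReal m2 v2 (q.2 - q.1))) :=
    ((measurable_gaussianPDFReal _ _).comp (measurable_snd.sub measurable_fst)).ennreal_ofReal
  ext s hs
  rw [Measure.map_apply (by fun_prop) hs, Measure.prod_apply (measurable_add hs)]
  have step1 : ∀ x : ℝ, (gaussianReal m2 v2) (Prod.mk x ⁻¹' ((fun p : ℝ × ℝ => p.1 + p.2) ⁻¹' s))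
      = ∫⁻ t in s, ENNReal.ofReal (gaussianPDFReal m2 v2 (t - x)) := by
    intro x
    have hset : Prod.mk x ⁻¹' ((fun p : ℝ × ℝ => p.1 + p.2) ⁻¹' s) = (fun y => x + y) ⁻¹' s := rfl
    rw [hset, ← Measure.map_apply (by fun_prop) hs, gaussianReal_map_const_add,
      gaussianReal_apply _ h2]
    congr 1
    ext t
    rw [gaussianPDF, gaussianPDFReal_sub]
  simp_rw [step1]
  have hinner : Measurable fun x : ℝ =>
      ∫⁻ t in s, ENNReal.ofReal (gaussianPDFReal m2 v2 (t - x)) :=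
    Measurable.lintegral_prod_right'
      (f := fun q : ℝ × ℝ => ENNReal.ofReal (gaussianPDFReal m2 v2 (q.2 - q.1))) hmeas2
  rw [gaussianReal_of_var_ne_zero _ h1,
    lintegral_withDensity_eq_lintegral_mul _ (measurable_gaussianPDF _ _) hinner]
  simp only [Pi.mul_apply]
  have pull : ∀ x : ℝ, gaussianPDF m1 v1 x * ∫⁻ t in s, ENNReal.ofReal (gaussianPDFReal m2 v2 (t - x))
      = ∫⁻ t in s, gaussianPDF m1 v1 x * ENNReal.ofReal (gaussianPDFReal m2 v2 (t - x)) := fun x =>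
    (lintegral_const_mul _
      (((measurable_gaussianPDFReal _ _).comp (measurable_id.sub measurable_const)).ennreal_ofReal)).symm
  simp_rw [pull]
  rw [lintegral_lintegral_swap
    (((measurable_gaussianPDF m1 v1).comp measurable_fst).mul hmeas2).aemeasurable]
  have inner : ∀ t : ℝ, ∫⁻ x, gaussianPDF m1 v1 x * ENNReal.ofReal (gaussianPDFReal m2 v2 (t - x))
      = gaussianPDF (m1 + m2) (v1 + v2) t := by
    intro t
    have hpt : ∀ x : ℝ, gaussianPDF m1 v1 x * ENNReal.ofReal (gaussianPDFReal m2 v2 (t - x))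
        = ENNReal.ofReal (gaussianPDFReal m1 v1 x * gaussianPDFReal m2 v2 (t - x)) := by
      intro x
      rw [ENNReal.ofReal_mul (gaussianPDFReal_nonneg _ _ _)]
      rfl
    simp_rw [hpt]
    rw [← ofReal_integral_eq_lintegral_ofReal (integrable_pdf_mul m1 m2 t h1 h2)
      (ae_of_all _ fun x => mul_nonneg (gaussianPDFReal_nonneg _ _ _) (gaussianPDFReal_nonneg _ _ _)),
      pdf_conv m1 m2 t h1 h2]
    rfl
  simp_rw [inner]
  rw [gaussianReal_apply _ h12]

lemma pi_gauss_map : ∀ {n : ℕ} (m : Fin n → ℝ) (v : Fin n → ℝ≥0) (a : Fin n → ℝ),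
    (Measure.pi fun i => gaussianReal (m i) (v i)).map (fun z => ∑ i, a i * z i)
      = gaussianReal (∑ i, a i * m i) (∑ i, (⟨(a i)^2, sq_nonneg _⟩ * v i : ℝ≥0)) := by
  intro n
  induction n with
  | zero =>
    intro m v a
    have : (fun z : Fin 0 → ℝ => ∑ i, a i * z i) = fun _ => (0 : ℝ) := by
      ext z; simp
    rw [this, Measure.map_const]
    simp [gaussianReal_zero_var]
  | succ n ih =>
    intro m v a
    set e := MeasurableEquiv.piFinSuccAbove (fun _ : Fin (n+1) => ℝ) 0 with he
    have hmp := measurePreserving_piFinSuccAbove (fun i => gaussianReal (m i) (v i)) 0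
    set g : ℝ × (Fin n → ℝ) → ℝ := fun p => a 0 * p.1 + ∑ j, a j.succ * p.2 j with hg
    have hgm : Measurable g := by
      apply Measurable.add
      · exact measurable_fst.const_mul _
      · exact Finset.measurable_sum _ fun j _ =>
          ((measurable_pi_apply j).comp measurable_snd).const_mul _
    have hfe : (fun z : Fin (n+1) → ℝ => ∑ i, a i * z i) = g ∘ e := by
      ext z
      simp [g, e, Fin.sum_univ_succ, MeasurableEquiv.piFinSuccAbove, Fin.zero_succAbove,
        Fin.insertNthEquiv, Fin.tail]
    rw [hfe, ← Measure.map_map hgm e.measurable, hmp.map_eq]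
    have htail : (Measure.pi fun j : Fin n => gaussianReal (m ((0 : Fin (n+1)).succAbove j))
        (v ((0 : Fin (n+1)).succAbove j)))
        = Measure.pi fun j : Fin n => gaussianReal (m j.succ) (v j.succ) := by
      simp_rw [Fin.zero_succAbove]
    rw [htail]
    have hsplit : g = (fun p : ℝ × ℝ => p.1 + p.2) ∘
        Prod.map (fun x : ℝ => a 0 * x) (fun zs : Fin n → ℝ => ∑ j, a j.succ * zs j) := rfl
    rw [hsplit, ← Measure.map_map (by fun_prop)
      ((measurable_const_mul _).prodMap (Finset.measurable_sum _ fun j _ =>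
        (measurable_pi_apply j).const_mul _)),
      ← Measure.map_prod_map _ _ (measurable_const_mul _) (Finset.measurable_sum _ fun j _ =>
        (measurable_pi_apply j).const_mul _)]
    have h0 : (gaussianReal (m 0) (v 0)).map (fun x : ℝ => a 0 * x)
        = gaussianReal (a 0 * m 0) (⟨(a 0)^2, sq_nonneg _⟩ * v 0) := gaussianReal_map_const_mul _
    rw [h0, ih (fun j => m j.succ) (fun j => v j.succ) (fun j => a j.succ), gaussian_conv,
      ← Fin.sum_univ_succ (fun i => a i * m i),
      ← Fin.sum_univ_succ (fun i => (⟨(a i)^2, sq_nonneg _⟩ * v i : ℝ≥0))]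

lemma setIntegral_Ioi_comp_sub (f : ℝ → ℝ) (a c : ℝ) :
    ∫ x in Ioi a, f (x - c) = ∫ x in Ioi (a - c), f x := by
  rw [← integral_indicator measurableSet_Ioi, ← integral_indicator measurableSet_Ioi,
    ← integral_sub_right_eq_self (fun x => (Ioi (a - c)).indicator f x) c]
  congr 1
  ext x
  simp only [Set.indicator_apply, mem_Ioi, sub_lt_sub_iff_right]

lemma gaussianReal_Ioi (m : ℝ) {v : ℝ≥0} (hv : v ≠ 0) :
    gaussianReal m v (Ioi 0) = ENNReal.ofReal (0.5 * erfc (-(m / Real.sqrt (2 * v)))) := by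
  rw [gaussianReal_apply_eq_integral _ hv]
  congr 1
  have hvpos : (0:ℝ) < v := by positivity
  set c : ℝ := Real.sqrt (2 * v) with hc
  have hcpos : 0 < c := by positivity
  have hc2 : c ^ 2 = 2 * v := Real.sq_sqrt (by positivity)
  have key : ∀ x : ℝ, gaussianPDFReal m v x
      = (Real.sqrt (2 * Real.pi * ↑v))⁻¹ * Real.exp (-(c⁻¹ * (x - m)) ^ 2) := by
    intro x
    rw [gaussianPDFReal]
    congr 2
    rw [mul_pow, inv_pow, hc2]
    field_simp
  simp_rw [key]
  rw [MeasureTheory.integral_const_mul,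
    setIntegral_Ioi_comp_sub (fun y => Real.exp (-(c⁻¹ * y) ^ 2)) 0 m,
    integral_comp_mul_left_Ioi (fun t => Real.exp (-t ^ 2)) _ (inv_pos.mpr hcpos)]
  have harg : c⁻¹ * (0 - m) = -(m / c) := by field_simp; ring
  rw [harg, inv_inv, smul_eq_mul, erfc]
  have hsplit : Real.sqrt (2 * Real.pi * ↑v) = Real.sqrt Real.pi * c := by
    rw [hc, ← Real.sqrt_mul Real.pi_pos.le]
    congr 1
    ring
  rw [hsplit]
  have hπ : (0:ℝ) < Real.sqrt Real.pi := Real.sqrt_pos.mpr Real.pi_pos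
  field_simp
  ring

lemma measurable_realSign : Measurable Real.sign := by
  unfold Real.sign
  exact Measurable.ite (measurableSet_lt measurable_id measurable_const) measurable_const
    (Measurable.ite (measurableSet_lt measurable_const measurable_id) measurable_const
      measurable_const)

lemma realSign_eq_one_iff {r : ℝ} : Real.sign r = 1 ↔ 0 < r := by
  constructor
  · intro h
    rcases lt_trichotomy r 0 with hr | hr | hr
    · rw [Real.sign_of_neg hr] at h; norm_num at h
    · rw [hr, Real.sign_zero] at h; norm_num at h
    · exact hr
  · exact Real.sign_of_pos

lemma realSign_eq_neg_one_iff {r : ℝ} : Real.sign r = -1 ↔ r < 0 := by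
  constructor
  · intro h
    rcases lt_trichotomy r 0 with hr | hr | hr
    · exact hr
    · rw [hr, Real.sign_zero] at h; norm_num at h
    · rw [Real.sign_of_pos hr] at h; norm_num at h
  · exact Real.sign_of_neg

lemma condX1_map (d : ℕ) (μ : Vec d) (σ γ η : ℝ) (y : ℝ) :
    (condX1 d μ σ γ η y).map (fun x : Inp d => ∑ i, (γ * μ i) * x.1 i + ∑ i, μ i * x.2.1 i)
      = gaussianReal ((∑ i, (γ * μ i) * (μ i * y)) + ∑ i, μ i * (μ i * y))
          ((∑ i, (⟨(γ * μ i)^2, sq_nonneg _⟩ * (σ^2).toNNReal : ℝ≥0)) +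
            ∑ i, (⟨(μ i)^2, sq_nonneg _⟩ * (γ * σ^2).toNNReal : ℝ≥0)) := by
  unfold condX1 gaussVec
  have hf1 : Measurable (fun z : Vec d => ∑ i, (γ * μ i) * z i) :=
    Finset.measurable_sum _ fun i _ => (measurable_pi_apply i).const_mul _
  have hf2 : Measurable (fun z : Vec d => ∑ i, μ i * z i) :=
    Finset.measurable_sum _ fun i _ => (measurable_pi_apply i).const_mul _
  have hstep : (fun x : Inp d => ∑ i, (γ * μ i) * x.1 i + ∑ i, μ i * x.2.1 i)
      = (fun p : ℝ × ℝ => p.1 + p.2) ∘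
        Prod.map (fun z : Vec d => ∑ i, (γ * μ i) * z i)
          ((fun z : Vec d => ∑ i, μ i * z i) ∘ Prod.fst) := rfl
  rw [hstep, ← Measure.map_map measurable_add (hf1.prodMap (hf2.comp measurable_fst)),
    ← Measure.map_prod_map _ _ hf1 (hf2.comp measurable_fst),
    ← Measure.map_map hf2 measurable_fst, Measure.map_fst_prod]
  simp only [measure_univ, one_smul]
  rw [pi_gauss_map (fun i => μ i * y) (fun _ => (σ^2).toNNReal) (fun i => γ * μ i),
    pi_gauss_map (fun i => μ i * y) (fun _ => (γ * σ^2).toNNReal) (fun i => μ i),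
    gaussian_conv]

end Helpers

theorem c1_optimal_accuracy_on_c1 (d : ℕ) (hd : 1 ≤ d) (μ : Vec d) (hμ : μ ≠ 0)
    (σ γ η : ℝ) (hσ : 0 < σ) (hγ : 0 < γ) (hη : 0 < η) :
    AccP (Pc1 d μ σ γ η)
        ((1 / (vnorm μ * Real.sqrt (1 + γ ^ 2))) • ((γ • μ, μ, (0 : Vec d)) : Inp d))
      = 0.5 * erfc (-((vnorm μ / (Real.sqrt 2 * σ)) * Real.sqrt (1 + 1 / γ))) := by
  classical
  set M : ℝ := ∑ i, μ i ^ 2 with hM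
  have hMpos : 0 < M := by
    obtain ⟨i, hi⟩ := Function.ne_iff.mp hμ
    exact Finset.sum_pos' (fun j _ => sq_nonneg _)
      ⟨i, Finset.mem_univ i, by simpa using pow_pos (abs_pos.mpr hi) 2 |>.trans_eq (sq_abs _)⟩
  have hvn : vnorm μ = Real.sqrt M := rfl
  have hvnpos : 0 < vnorm μ := by rw [hvn]; exact Real.sqrt_pos.mpr hMpos
  set c : ℝ := 1 / (vnorm μ * Real.sqrt (1 + γ ^ 2)) with hc
  have hcpos : 0 < c := by
    rw [hc]
    have : (0:ℝ) < Real.sqrt (1 + γ ^ 2) := Real.sqrt_pos.mpr (by positivity)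
    positivity
  set w : Inp d := c • ((γ • μ, μ, (0 : Vec d)) : Inp d) with hw
  set T : Inp d → ℝ := fun x => ∑ i, (γ * μ i) * x.1 i + ∑ i, μ i * x.2.1 i with hT
  have hTm : Measurable T := by
    apply Measurable.add
    · exact Finset.measurable_sum _ fun i _ =>
        ((measurable_pi_apply i).comp measurable_fst).const_mul _
    · exact Finset.measurable_sum _ fun i _ =>
        ((measurable_pi_apply i).comp (measurable_fst.comp measurable_snd)).const_mul _
  have hpred : ∀ x : Inp d, pred w x = c * T x := by
    intro x
    simp only [hw, hT, pred, dot, Prod.smul_fst, Prod.smul_snd, Pi.smul_apply, smul_eq_mul,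
      Pi.zero_apply, mul_zero, zero_mul, Finset.sum_const_zero, add_zero, mul_add,
      Finset.mul_sum]
    congr 1 <;> exact Finset.sum_congr rfl fun i _ => by ring
  have hsign1 : ∀ x : Inp d, (Real.sign (pred w x) = 1 ↔ T x ∈ Set.Ioi (0:ℝ)) := by
    intro x
    rw [hpred, realSign_eq_one_iff, Set.mem_Ioi]
    constructor
    · intro h; nlinarith
    · intro h; exact mul_pos hcpos h
  have hsignm1 : ∀ x : Inp d, (Real.sign (pred w x) = -1 ↔ T x ∈ Set.Iio (0:ℝ)) := by
    intro x
    rw [hpred, realSign_eq_neg_one_iff, Set.mem_Iio]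
    constructor
    · intro h; nlinarith
    · intro h
      have := mul_pos hcpos (neg_pos.mpr h)
      nlinarith
  -- probability instances
  haveI hP1 : ∀ (m : Vec d) (v : ℝ), MeasureTheory.IsProbabilityMeasure (gaussVec d m v) := by
    intro m v; unfold gaussVec; infer_instance
  haveI hcond : ∀ y : ℝ, MeasureTheory.IsProbabilityMeasure (condX1 d μ σ γ η y) := by
    intro y
    haveI := hP1 (fun i => μ i * y) (σ^2)
    haveI := hP1 (fun i => μ i * y) (γ * σ^2)
    haveI := hP1 μ (η^2)
    unfold condX1; infer_instance
  -- variance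
  set V : ℝ≥0 := (∑ i, (⟨(γ * μ i)^2, sq_nonneg _⟩ * (σ^2).toNNReal : ℝ≥0)) +
      ∑ i, (⟨(μ i)^2, sq_nonneg _⟩ * (γ * σ^2).toNNReal : ℝ≥0) with hV
  have hVr : (V : ℝ) = γ * (γ + 1) * σ^2 * M := by
    rw [hV]
    push_cast [Real.coe_toNNReal _ (sq_nonneg σ),
      Real.coe_toNNReal _ (mul_nonneg hγ.le (sq_nonneg σ))]
    rw [← Finset.sum_add_distrib, hM, Finset.mul_sum]
    exact Finset.sum_congr rfl fun i _ => by
      change (γ * μ i) ^ 2 * ((σ ^ 2).toNNReal : ℝ) + μ i ^ 2 * ((γ * σ ^ 2).toNNReal : ℝ) = _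
      rw [Real.coe_toNNReal _ (sq_nonneg σ),
        Real.coe_toNNReal _ (mul_nonneg hγ.le (sq_nonneg σ))]
      ring
  have hVpos : (0:ℝ) < (V : ℝ) := by rw [hVr]; positivity
  have hVne : V ≠ 0 := by
    intro h0; rw [h0] at hVpos; simp at hVpos
  -- mean at y = 1
  have hmean1 : ((∑ i, (γ * μ i) * (μ i * 1)) + ∑ i, μ i * (μ i * 1)) = (γ + 1) * M := by
    rw [add_mul, one_mul, hM, Finset.mul_sum, ← Finset.sum_add_distrib,
      ← Finset.sum_add_distrib]
    exact Finset.sum_congr rfl fun i _ => by ring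
  have hmeanneg : ((∑ i, (γ * μ i) * (μ i * (-1))) + ∑ i, μ i * (μ i * (-1)))
      = -((γ + 1) * M) := by
    rw [← hmean1, neg_add]
    congr 1 <;> · rw [← Finset.sum_neg_distrib]; exact Finset.sum_congr rfl fun i _ => by ring
  have law1 := condX1_map d μ σ γ η 1
  have lawm1 := condX1_map d μ σ γ η (-1)
  rw [hmean1] at law1
  rw [hmeanneg] at lawm1
  -- measures of the two events
  have key1 : (condX1 d μ σ γ η 1) {x : Inp d | Real.sign (pred w x) = 1}
      = ENNReal.ofReal (0.5 * erfc (-(((γ + 1) * M) / Real.sqrt (2 * V)))) := by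
    have hset : {x : Inp d | Real.sign (pred w x) = 1} = T ⁻¹' (Set.Ioi 0) := by
      ext x; exact hsign1 x
    rw [hset, ← Measure.map_apply hTm measurableSet_Ioi, hT, law1, gaussianReal_Ioi _ hVne]
  have hmapneg : gaussianReal ((γ + 1) * M) V
      = (gaussianReal (-((γ + 1) * M)) V).map (fun x : ℝ => -1 * x) := by
    rw [gaussianReal_map_const_mul]
    have h1 : (⟨(-1:ℝ)^2, sq_nonneg _⟩ : ℝ≥0) = 1 := by ext; norm_num
    congr 1
    · ring
    · ext; simp
  have keym1 : (condX1 d μ σ γ η (-1)) {x : Inp d | Real.sign (pred w x) = -1}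
      = ENNReal.ofReal (0.5 * erfc (-(((γ + 1) * M) / Real.sqrt (2 * V)))) := by
    have hset : {x : Inp d | Real.sign (pred w x) = -1} = T ⁻¹' (Set.Iio 0) := by
      ext x; exact hsignm1 x
    have hpre : ((fun x : ℝ => -1 * x) ⁻¹' (Set.Ioi 0)) = Set.Iio 0 := by
      ext x; simp
    rw [hset, ← Measure.map_apply hTm measurableSet_Iio, hT, lawm1, ← hpre,
      ← Measure.map_apply (measurable_const_mul _) measurableSet_Ioi, ← hmapneg,
      gaussianReal_Ioi _ hVne]
  -- measurability of the accuracy event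
  have hpredm : Measurable (pred w) := by
    have : pred w = fun x => c * T x := funext hpred
    rw [this]; exact hTm.const_mul c
  have hS : MeasurableSet {p : Inp d × ℝ | Real.sign (pred w p.1) = p.2} :=
    measurableSet_eq_fun ((measurable_realSign.comp hpredm).comp measurable_fst) measurable_snd
  -- assemble
  rw [AccP, Pc1, jointOf, Measure.add_apply, Measure.smul_apply, Measure.smul_apply,
    Measure.prod_dirac, Measure.prod_dirac,
    Measure.map_apply measurable_prodMk_right hS,
    Measure.map_apply measurable_prodMk_right hS]
  have hpre1 : ((fun x : Inp d => (x, (1:ℝ))) ⁻¹' {p : Inp d × ℝ | Real.sign (pred w p.1) = p.2})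
      = {x : Inp d | Real.sign (pred w x) = 1} := rfl
  have hprem1 : ((fun x : Inp d => (x, (-1:ℝ))) ⁻¹' {p : Inp d × ℝ | Real.sign (pred w p.1) = p.2})
      = {x : Inp d | Real.sign (pred w x) = -1} := rfl
  rw [hpre1, hprem1, key1, keym1]
  simp only [smul_eq_mul]
  rw [← add_mul,
    ENNReal.inv_two_add_inv_two, one_mul]
  have herfc_nonneg : 0 ≤ 0.5 * erfc (-(((γ + 1) * M) / Real.sqrt (2 * V))) := by
    apply mul_nonneg (by norm_num)
    unfold erfc
    apply mul_nonneg
    · positivity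
    · exact MeasureTheory.integral_nonneg fun t => (Real.exp_pos _).le
  rw [ENNReal.toReal_ofReal herfc_nonneg]
  -- identify the erfc arguments
  have harg : ((γ + 1) * M) / Real.sqrt (2 * V)
      = (vnorm μ / (Real.sqrt 2 * σ)) * Real.sqrt (1 + 1 / γ) := by
    have hA : 0 ≤ ((γ + 1) * M) / Real.sqrt (2 * V) := by positivity
    have hB : 0 ≤ (vnorm μ / (Real.sqrt 2 * σ)) * Real.sqrt (1 + 1 / γ) := by positivity
    have hsq : (((γ + 1) * M) / Real.sqrt (2 * V)) ^ 2
        = ((vnorm μ / (Real.sqrt 2 * σ)) * Real.sqrt (1 + 1 / γ)) ^ 2 := by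
      have e1 : (Real.sqrt (1 + 1 / γ))^2 = 1 + 1/γ := Real.sq_sqrt (by positivity)
      have e2 : (Real.sqrt 2 * σ)^2 = 2 * σ^2 := by
        rw [mul_pow, Real.sq_sqrt (by norm_num : (0:ℝ) ≤ 2)]
      have e3 : (vnorm μ)^2 = M := by rw [hvn]; exact Real.sq_sqrt hMpos.le
      have hR : ((vnorm μ / (Real.sqrt 2 * σ)) * Real.sqrt (1 + 1 / γ)) ^ 2
          = (vnorm μ)^2 / (Real.sqrt 2 * σ)^2 * (Real.sqrt (1 + 1 / γ))^2 := by
        rw [mul_pow, div_pow]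
      have hL : (((γ + 1) * M) / Real.sqrt (2 * V)) ^ 2
          = ((γ + 1) * M)^2 / (2 * (V:ℝ)) := by
        rw [div_pow, Real.sq_sqrt (by positivity)]
      rw [hL, hR, e1, e2, e3, hVr]
      field_simp
    calc ((γ + 1) * M) / Real.sqrt (2 * V)
        = Real.sqrt ((((γ + 1) * M) / Real.sqrt (2 * V)) ^ 2) := (Real.sqrt_sq hA).symm
      _ = Real.sqrt (((vnorm μ / (Real.sqrt 2 * σ)) * Real.sqrt (1 + 1 / γ)) ^ 2) := by rw [hsq]
      _ = (vnorm μ / (Real.sqrt 2 * σ)) * Real.sqrt (1 + 1 / γ) := Real.sqrt_sq hB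
  rw [harg]
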